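/- Consider the generalized UCB policy with increasing exploration functions f_1,…,f_K. If f_k(n) = o(n) for every k∈{1,…,K}, and there exist γ>1/2 and N≥1 such that f_k(n) ≥ γ·log log n for every k and every n≥N, then the generalized UCB policy is Hannan consistent: E_θ[R_n] = o(n) for every environment θ∈Θ. -/

import Mathlib

open MeasureTheory ProbabilityTheory Filter Asymptotics

noncomputable section

namespace Bandit

/-- Empirical mean of the first `s` values of the sequence `x`. -/
def empMean (x : ℕ → ℝ) (s : ℕ) : ℝ := (∑ u ∈ Finset.range s, x u) / s

/-- An element of `Fin K` maximizing `g`. -/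
def argmaxFin {K : ℕ} (hK : 0 < K) (g : Fin K → ℝ) : Fin K :=
  (Finset.univ.exists_max_image g ⟨⟨0, hK⟩, Finset.mem_univ _⟩).choose

theorem argmaxFin_spec {K : ℕ} (hK : 0 < K) (g : Fin K → ℝ) (j : Fin K) :
    g j ≤ g (argmaxFin hK g) := by
  have h := (Finset.univ.exists_max_image g ⟨⟨0, hK⟩, Finset.mem_univ _⟩).choose_spec
  exact h.2 j (Finset.mem_univ j)

/-- The arm pulled at round `t` by a generalized UCB policy with exploration functions `f`,
given the reward table `x` (where `x k u` is the reward of the `(u+1)`-th pull of arm `k`)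
and the vector `T` of numbers of pulls of each arm before round `t`.
During the first `K` rounds (`t ≤ K`), each arm is pulled once; afterwards an arm maximizing
the UCB index `X̂_{k,T_k(t-1)} + √(f_k(t) / T_k(t-1))` is pulled. -/
def ucbArmAux {K : ℕ} (hK : 0 < K) (f : Fin K → ℕ → ℝ) (x : Fin K → ℕ → ℝ)
    (T : Fin K → ℕ) (t : ℕ) : Fin K :=
  if h : t ≤ K then ⟨t - 1, by omega⟩
  else argmaxFin hK fun j => empMean (x j) (T j) + Real.sqrt (f j t / (T j : ℝ))

/-- `ucbCount hK f x t k` is `T_k(t)`, the number of pulls of arm `k` during rounds `1,…,t`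
by the generalized UCB policy with exploration functions `f` on the reward table `x`. -/
def ucbCount {K : ℕ} (hK : 0 < K) (f : Fin K → ℕ → ℝ) (x : Fin K → ℕ → ℝ) :
    ℕ → Fin K → ℕ
  | 0, _ => 0
  | t + 1, k =>
    ucbCount hK f x t k + if ucbArmAux hK f x (ucbCount hK f x t) (t + 1) = k then 1 else 0

/-- The arm pulled at round `t ≥ 1` by the generalized UCB policy. -/
def ucbArm {K : ℕ} (hK : 0 < K) (f : Fin K → ℕ → ℝ) (x : Fin K → ℕ → ℝ) (t : ℕ) : Fin K :=
  ucbArmAux hK f x (ucbCount hK f x (t - 1)) t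

/-- The exploration function of the UCB(ρ) policy: `f_k(t) = ρ log t` for every arm. -/
def rhoLog {K : ℕ} (ρ : ℝ) : Fin K → ℕ → ℝ := fun _ t => ρ * Real.log t

/-- The reward table of the two-armed deterministic environment `θ = (δ_a, δ_b)`:
arm `0` always gives `a` and arm `1` always gives `b`. -/
def diracTable (a b : ℝ) : Fin 2 → ℕ → ℝ := fun k _ => if k = 0 then a else b

end Bandit
namespace Bandit

/-- `ν` is a valid bandit environment: each arm's reward distribution is a probability
measure on `[0,1]`. -/
def IsEnv {K : ℕ} (ν : Fin K → Measure ℝ) : Prop :=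
  ∀ k, IsProbabilityMeasure (ν k) ∧ ν k (Set.Icc 0 1) = 1

/-- The mean of a reward distribution. -/
def mean (ν : Measure ℝ) : ℝ := ∫ x, x ∂ν

/-- `μ* = max_k μ_k`, the best mean reward of the environment `ν`. -/
def bestMean {K : ℕ} (hK : 0 < K) (ν : Fin K → Measure ℝ) : ℝ :=
  Finset.univ.sup' ⟨⟨0, hK⟩, Finset.mem_univ _⟩ fun k => mean (ν k)

/-- `Δ_k = μ* - μ_k`, the optimality gap of arm `k` in the environment `ν`. -/
def gap {K : ℕ} (hK : 0 < K) (ν : Fin K → Measure ℝ) (k : Fin K) : ℝ :=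
  bestMean hK ν - mean (ν k)

/-- `X` is a reward table process on `(Ω, P)` for the environment `ν`: the random variables
`X k u` (the reward of the `(u+1)`-th pull of arm `k`) are mutually independent, take values
in `[0,1]`, and `X k u` has distribution `ν k` for every `u`. -/
def IsRewardTable {K : ℕ} {Ω : Type*} [MeasurableSpace Ω] (P : Measure Ω)
    (ν : Fin K → Measure ℝ) (X : Fin K → ℕ → Ω → ℝ) : Prop :=
  (∀ k u, Measurable (X k u)) ∧
  (∀ k u ω, X k u ω ∈ Set.Icc (0 : ℝ) 1) ∧
  (∀ k u, Measure.map (X k u) P = ν k) ∧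
  iIndepFun (fun p : Fin K × ℕ => X p.1 p.2) P

/-- `E_θ[T_k(n)]`, the expected number of pulls of arm `k` up to round `n`, for the
generalized UCB policy with exploration functions `f`. -/
def ucbExpCount {K : ℕ} (hK : 0 < K) (f : Fin K → ℕ → ℝ) {Ω : Type*} [MeasurableSpace Ω]
    (P : Measure Ω) (X : Fin K → ℕ → Ω → ℝ) (n : ℕ) (k : Fin K) : ℝ :=
  ∫ ω, (ucbCount hK f (fun j u => X j u ω) n k : ℝ) ∂P

/-- `E_θ[R_n] = ∑_k Δ_k E_θ[T_k(n)]`, the expected regret at horizon `n` of the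
generalized UCB policy with exploration functions `f` in the environment `ν`. -/
def ucbRegret {K : ℕ} (hK : 0 < K) (f : Fin K → ℕ → ℝ) {Ω : Type*} [MeasurableSpace Ω]
    (P : Measure Ω) (ν : Fin K → Measure ℝ) (X : Fin K → ℕ → Ω → ℝ) (n : ℕ) : ℝ :=
  ∑ k, gap hK ν k * ucbExpCount hK f P X n k

end Bandit
namespace Bandit

/-- The family `Θ_k` of sets of admissible reward distributions per arm, as in the paper:
each `Θ_k` consists of probability measures on `[0,1]` and contains every two-point
distribution `p δ_a + (1-p) δ_b` with `p, a, b ∈ [0,1]`. -/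
def Admissible {K : ℕ} (Θk : Fin K → Set (Measure ℝ)) : Prop :=
  (∀ k, ∀ ν ∈ Θk k, IsProbabilityMeasure ν ∧ ν (Set.Icc 0 1) = 1) ∧
  (∀ k, ∀ p a b : ℝ, p ∈ Set.Icc (0 : ℝ) 1 → a ∈ Set.Icc (0 : ℝ) 1 → b ∈ Set.Icc (0 : ℝ) 1 →
    ENNReal.ofReal p • Measure.dirac a + ENNReal.ofReal (1 - p) • Measure.dirac b ∈ Θk k)

/-- `Θ = Θ_1 × … × Θ_K`, the set of admissible environments. -/
def envSet {K : ℕ} (Θk : Fin K → Set (Measure ℝ)) : Set (Fin K → Measure ℝ) :=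
  {θ | ∀ k, θ k ∈ Θk k}

end Bandit
namespace Bandit


section Auxiliary

variable {K : ℕ} (hK : 0 < K) (f : Fin K → ℕ → ℝ) (x : Fin K → ℕ → ℝ)

lemma ucbCount_le (t : ℕ) (k : Fin K) : ucbCount hK f x t k ≤ t := by
  induction t with
  | zero => simp [ucbCount]
  | succ t ih =>
    simp only [ucbCount]
    split <;> omega

lemma ucbCount_mono (k : Fin K) : Monotone (fun t => ucbCount hK f x t k) := by
  apply monotone_nat_of_le_succ
  intro t
  simp only [ucbCount]
  split <;> omega

lemma one_le_ucbCount {t : ℕ} (k : Fin K) (ht : K ≤ t) : 1 ≤ ucbCount hK f x t k := by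
  have h1 : 1 ≤ ucbCount hK f x (k.val + 1) k := by
    simp only [ucbCount]
    have : ucbArmAux hK f x (ucbCount hK f x k.val) (k.val + 1) = k := by
      have hle : k.val + 1 ≤ K := k.isLt
      simp only [ucbArmAux, dif_pos hle]
      exact Fin.ext (by simp)
    rw [if_pos this]
    omega
  exact le_trans h1 (ucbCount_mono hK f x k (by have := k.isLt; omega))

lemma pull_index_ge {t : ℕ} {k : Fin K} (htK : K < t + 1)
    (hpull : ucbArmAux hK f x (ucbCount hK f x t) (t + 1) = k) (j : Fin K) :
    empMean (x j) (ucbCount hK f x t j) +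
      Real.sqrt (f j (t + 1) / (ucbCount hK f x t j : ℝ)) ≤
    empMean (x k) (ucbCount hK f x t k) +
      Real.sqrt (f k (t + 1) / (ucbCount hK f x t k : ℝ)) := by
  rw [ucbArmAux, dif_neg (by omega)] at hpull
  rw [← hpull]
  exact argmaxFin_spec hK (fun j => empMean (x j) (ucbCount hK f x t j) +
    Real.sqrt (f j (t + 1) / (ucbCount hK f x t j : ℝ))) j

lemma empMean_nonneg {x : ℕ → ℝ} (hx : ∀ u, 0 ≤ x u) (s : ℕ) : 0 ≤ empMean x s :=
  div_nonneg (Finset.sum_nonneg fun u _ => hx u) (Nat.cast_nonneg s)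

/-- The key deterministic bound on the number of pulls of a suboptimal arm. -/
lemma det_bound (k kstar : Fin K) (μk μs Δ : ℝ) (m t1 : ℕ)
    (hx : ∀ j u, x j u ∈ Set.Icc (0:ℝ) 1)
    (hΔ : Δ = μs - μk) (hΔpos : 0 < Δ) (hμs : μs ≤ 1)
    (hm : ∀ s ≥ m, empMean (x k) s ≤ μk + Δ / 3)
    (hmstar : ∀ s ≥ m, μs - Δ / 3 ≤ empMean (x kstar) s)
    (ht1K : K + 1 ≤ t1)
    (ht1f : ∀ t ≥ t1, (max m 1 : ℝ) ≤ f kstar t)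
    (hfmono : Monotone (f k)) :
    ∀ n, (ucbCount hK f x n k : ℝ) ≤ t1 + m + 9 * max (f k n) 0 / Δ ^ 2 + 1 := by
  have hg0 : ∀ n, (0:ℝ) ≤ 9 * max (f k n) 0 / Δ ^ 2 := fun n =>
    div_nonneg (by positivity) (by positivity)
  have hgmono : ∀ {a b : ℕ}, a ≤ b →
      9 * max (f k a) 0 / Δ ^ 2 ≤ 9 * max (f k b) 0 / Δ ^ 2 := by
    intro a b hab
    gcongr
    exact hfmono hab
  intro n
  induction n with
  | zero =>
    simp only [ucbCount, Nat.cast_zero]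
    have := hg0 0
    positivity
  | succ n ih =>
    by_cases hpull : ucbArmAux hK f x (ucbCount hK f x n) (n + 1) = k
    · by_cases ht1 : n + 1 < t1
      · have h1 : (ucbCount hK f x (n+1) k : ℝ) ≤ (n+1 : ℕ) := by
          exact_mod_cast ucbCount_le hK f x (n+1) k
        have := hg0 (n+1)
        have hcast : ((n+1 : ℕ) : ℝ) ≤ t1 := by exact_mod_cast ht1.le
        calc (ucbCount hK f x (n+1) k : ℝ) ≤ ((n+1:ℕ):ℝ) := h1
          _ ≤ t1 := hcast
          _ ≤ t1 + m + 9 * max (f k (n+1)) 0 / Δ ^ 2 + 1 := by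
              have : (0:ℝ) ≤ m := Nat.cast_nonneg m
              linarith
      · push_neg at ht1
        have htK : K < n + 1 := by omega
        have hidx := pull_index_ge hK f x htK hpull kstar
        set s : ℕ := ucbCount hK f x n k with hs
        set ss : ℕ := ucbCount hK f x n kstar with hss
        have hs1 : 1 ≤ s := one_le_ucbCount hK f x k (by omega)
        have hss1 : 1 ≤ ss := one_le_ucbCount hK f x kstar (by omega)
        have hlow : μs - Δ / 3 ≤ empMean (x kstar) ss +
            Real.sqrt (f kstar (n+1) / (ss : ℝ)) := by
          by_cases hssm : m ≤ ss
          · have := hmstar ss hssm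
            have hsq : 0 ≤ Real.sqrt (f kstar (n+1) / (ss : ℝ)) := Real.sqrt_nonneg _
            linarith
          · push_neg at hssm
            have hf1 : (max m 1 : ℝ) ≤ f kstar (n+1) := ht1f (n+1) ht1
            have hssr : (1:ℝ) ≤ (ss:ℝ) := by exact_mod_cast hss1
            have hssm' : (ss : ℝ) ≤ (max m 1 : ℝ) := by
              have : ss ≤ max m 1 := le_max_of_le_left (by omega)
              exact_mod_cast this
            have h1 : (1:ℝ) ≤ f kstar (n+1) / (ss:ℝ) := by
              rw [le_div_iff₀ (by linarith)]
              nlinarith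
            have hsq1 : (1:ℝ) ≤ Real.sqrt (f kstar (n+1) / (ss:ℝ)) := by
              rw [show (1:ℝ) = Real.sqrt 1 by simp]
              exact Real.sqrt_le_sqrt h1
            have hemp : 0 ≤ empMean (x kstar) ss :=
              empMean_nonneg (fun u => (hx kstar u).1) ss
            linarith
        have hup : μs - Δ / 3 ≤ empMean (x k) s + Real.sqrt (f k (n+1) / (s : ℝ)) :=
          le_trans hlow hidx
        have hsbound : (s : ℝ) ≤ (m : ℝ) ∨ (s:ℝ) ≤ 9 * max (f k (n+1)) 0 / Δ ^ 2 := by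
          by_cases hsm : m ≤ s
          · right
            have hmean := hm s hsm
            have hsq : Δ / 3 ≤ Real.sqrt (f k (n+1) / (s:ℝ)) := by linarith
            have hpos : 0 < Δ / 3 := by linarith
            have h2 : (Δ/3)^2 ≤ f k (n+1) / (s:ℝ) := by
              have := Real.sq_sqrt (by
                by_contra hneg
                push_neg at hneg
                have : Real.sqrt (f k (n+1) / (s:ℝ)) = 0 :=
                  Real.sqrt_eq_zero_of_nonpos hneg.le
                rw [this] at hsq; linarith)
              nlinarith [Real.sqrt_nonneg (f k (n+1) / (s:ℝ))]
            have hsr : (0:ℝ) < (s:ℝ) := by exact_mod_cast hs1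
            have h3 : (Δ/3)^2 * (s:ℝ) ≤ f k (n+1) := (le_div_iff₀ hsr).mp h2
            have h4 : f k (n+1) ≤ max (f k (n+1)) 0 := le_max_left _ _
            rw [le_div_iff₀ (by positivity : (0:ℝ) < Δ ^ 2)]
            nlinarith
          · left; push_neg at hsm; exact_mod_cast hsm.le
        have hTsucc : (ucbCount hK f x (n+1) k : ℝ) = (s:ℝ) + 1 := by
          simp only [ucbCount, if_pos hpull, ← hs]
          push_cast
          ring
        rw [hTsucc]
        rcases hsbound with h | h
        · have := hg0 (n+1)
          have ht1r : (0:ℝ) ≤ (t1:ℝ) := Nat.cast_nonneg t1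
          linarith
        · have hmr : (0:ℝ) ≤ (m:ℝ) := Nat.cast_nonneg m
          have ht1r : (0:ℝ) ≤ (t1:ℝ) := Nat.cast_nonneg t1
          linarith
    · have heq : ucbCount hK f x (n+1) k = ucbCount hK f x n k := by
        simp only [ucbCount, if_neg hpull, Nat.add_zero]
      rw [heq]
      have := hgmono (Nat.le_succ n)
      linarith

end Auxiliary

section ProbAux

variable {Ω : Type} [MeasurableSpace Ω]

lemma measurable_sInf_mem {G : ℕ → Set Ω} (hG : ∀ j, MeasurableSet (G j))
    (hmono : Monotone G) : Measurable (fun ω => sInf {m | ω ∈ G m}) := by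
  apply measurable_to_countable'
  intro j
  have : (fun ω => sInf {m | ω ∈ G m}) ⁻¹' {j} =
      if j = 0 then G 0 ∪ (⋂ m, (G m)ᶜ) else G j ∩ (G (j-1))ᶜ := by
    ext ω
    simp only [Set.mem_preimage, Set.mem_singleton_iff]
    split
    · next hj =>
      subst hj
      simp only [Set.mem_union, Set.mem_iInter, Set.mem_compl_iff]
      constructor
      · intro h
        by_cases hne : {m | ω ∈ G m}.Nonempty
        · left
          have := Nat.sInf_mem hne
          rwa [h] at this
        · right
          intro m hm
          exact hne ⟨m, hm⟩
      · rintro (h | h)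
        · exact Nat.sInf_eq_zero.2 (Or.inl h)
        · exact Nat.sInf_eq_zero.2 (Or.inr (by ext m; simp [h m]))
    · next hj =>
      simp only [Set.mem_inter_iff, Set.mem_compl_iff]
      constructor
      · intro h
        have hne : {m | ω ∈ G m}.Nonempty := by
          by_contra hne
          rw [Set.not_nonempty_iff_eq_empty.1 hne] at h
          simp [Nat.sInf_empty] at h
          omega
        constructor
        · have := Nat.sInf_mem hne
          rwa [h] at this
        · intro hmem
          have : sInf {m | ω ∈ G m} ≤ j - 1 := Nat.sInf_le hmem
          omega
      · rintro ⟨h1, h2⟩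
        have hle : sInf {m | ω ∈ G m} ≤ j := Nat.sInf_le h1
        have hne : {m | ω ∈ G m}.Nonempty := ⟨j, h1⟩
        have hmem := Nat.sInf_mem hne
        by_contra hne2
        have hlt : sInf {m | ω ∈ G m} ≤ j - 1 := by omega
        exact h2 (hmono hlt hmem)
  rw [this]
  split
  · exact (hG 0).union (MeasurableSet.iInter fun m => (hG m).compl)
  · exact (hG j).inter (hG (j-1)).compl

lemma mean_mem_Icc (μ : Measure ℝ) [IsProbabilityMeasure μ] (h1 : μ (Set.Icc 0 1) = 1) :
    mean μ ∈ Set.Icc (0:ℝ) 1 := by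
  have hae : ∀ᵐ x ∂μ, x ∈ Set.Icc (0:ℝ) 1 := by
    rw [ae_iff]
    have : {x : ℝ | ¬ x ∈ Set.Icc (0:ℝ) 1} = (Set.Icc (0:ℝ) 1)ᶜ := rfl
    rw [this, measure_compl measurableSet_Icc (by simp), h1]
    simp
  have hint : Integrable (fun x : ℝ => x) μ := by
    apply Integrable.mono' (integrable_const (1:ℝ)) aestronglyMeasurable_id
    filter_upwards [hae] with x hx
    simp only [id_eq]
    rw [Real.norm_eq_abs, abs_le]
    exact ⟨by linarith [hx.1], hx.2⟩
  constructor
  · exact integral_nonneg_of_ae (by filter_upwards [hae] with x hx using hx.1)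
  · calc ∫ x, x ∂μ ≤ ∫ _, (1:ℝ) ∂μ :=
        integral_mono_ae hint (integrable_const 1) (by filter_upwards [hae] with x hx using hx.2)
    _ = 1 := by simp

variable {K : ℕ} {P : Measure Ω} {ν : Fin K → Measure ℝ} {X : Fin K → ℕ → Ω → ℝ}

lemma slln_arm (hP : IsProbabilityMeasure P) (hT : IsRewardTable P ν X) (k : Fin K)
    {ε : ℝ} (hε : 0 < ε) :
    ∀ᵐ ω ∂P, ∃ m : ℕ, ∀ s ≥ m, |empMean (fun u => X k u ω) s - mean (ν k)| ≤ ε := by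
  obtain ⟨hmeas, hmem, hmap, hindep⟩ := hT
  have hint : Integrable (X k 0) P := by
    apply Integrable.mono' (integrable_const (1:ℝ)) (hmeas k 0).aestronglyMeasurable
    refine Filter.Eventually.of_forall fun ω => ?_
    rw [Real.norm_eq_abs, abs_le]
    exact ⟨by linarith [(hmem k 0 ω).1], (hmem k 0 ω).2⟩
  have hpair : Pairwise (Function.onFun (IndepFun · · P) fun u => X k u) := by
    intro u v huv
    exact hindep.indepFun (i := (k, u)) (j := (k, v)) (by simp [huv])
  have hident : ∀ u, IdentDistrib (X k u) (X k 0) P P :=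
    fun u => ⟨(hmeas k u).aemeasurable, (hmeas k 0).aemeasurable, by rw [hmap, hmap]⟩
  have hexp : P[X k 0] = mean (ν k) := by
    have h := integral_map (φ := X k 0) (μ := P) (hmeas k 0).aemeasurable
      (f := fun x : ℝ => x) aestronglyMeasurable_id
    rw [mean, ← hmap k 0]
    exact h.symm
  have hae := ProbabilityTheory.strong_law_ae_real (fun u => X k u) hint hpair hident
  filter_upwards [hae] with ω hω
  rw [hexp] at hω
  obtain ⟨m, hm⟩ := (Metric.tendsto_atTop.1 hω) ε hε
  exact ⟨m, fun s hs => by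
    have := hm s hs
    rw [Real.dist_eq] at this
    exact le_of_lt this⟩

end ProbAux

/-- If f_k(n) = o(n) for every k and there exist γ > 1/2 and N ≥ 1 with
f_k(n) ≥ γ log log n for every k and n ≥ N, then the generalized UCB policy with increasing
exploration functions f_1, …, f_K is Hannan consistent: E_θ[R_n] = o(n) for every θ ∈ Θ. -/
theorem generalized_ucb_hannan_consistent
    (K : ℕ) (hK : 0 < K) (hK2 : 2 ≤ K)
    (Θk : Fin K → Set (Measure ℝ)) (hΘ : Admissible Θk)
    (f : Fin K → ℕ → ℝ) (hf : ∀ k, Monotone (f k))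
    (hfo : ∀ k, (fun n : ℕ => f k n) =o[Filter.atTop] fun n : ℕ => (n : ℝ))
    (γ : ℝ) (hγ : 1 / 2 < γ) (N : ℕ) (hN : 1 ≤ N)
    (hflow : ∀ k, ∀ n ≥ N, γ * Real.log (Real.log n) ≤ f k n) :
    ∀ θ ∈ envSet Θk,
      ∀ (Ω : Type) (_ : MeasurableSpace Ω) (P : Measure Ω)
        (X : Fin K → ℕ → Ω → ℝ), IsProbabilityMeasure P → IsRewardTable P θ X →
        (fun n : ℕ => ucbRegret hK f P θ X n) =o[Filter.atTop] fun n : ℕ => (n : ℝ) := by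
  classical
  intro θ hθ Ω mΩ P X hP hT
  have hγ0 : (0:ℝ) < γ := by linarith
  have hprob : ∀ j, IsProbabilityMeasure (θ j) := fun j => (hΘ.1 j _ (hθ j)).1
  have hIcc : ∀ j, θ j (Set.Icc 0 1) = 1 := fun j => (hΘ.1 j _ (hθ j)).2
  have hmean : ∀ j, mean (θ j) ∈ Set.Icc (0:ℝ) 1 := fun j => by
    have := hprob j; exact mean_mem_Icc (θ j) (hIcc j)
  obtain ⟨kstar, -, hks⟩ := Finset.univ.exists_mem_eq_sup'
    (⟨⟨0, hK⟩, Finset.mem_univ _⟩) (fun j => mean (θ j))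
  have hbs : bestMean hK θ = mean (θ kstar) := hks
  have hμs1 : bestMean hK θ ≤ 1 := by rw [hbs]; exact (hmean kstar).2
  have hgap0 : ∀ j, 0 ≤ gap hK θ j := fun j =>
    sub_nonneg.2 (Finset.le_sup' (fun j => mean (θ j)) (Finset.mem_univ j))
  have hftop : ∀ j : Fin K, Filter.Tendsto (fun t : ℕ => f j t) Filter.atTop Filter.atTop := by
    intro j
    have hll : Filter.Tendsto (fun n : ℕ => γ * Real.log (Real.log n))
        Filter.atTop Filter.atTop :=
      (Real.tendsto_log_atTop.comp
        (Real.tendsto_log_atTop.comp tendsto_natCast_atTop_atTop)).const_mul_atTop hγ0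
    exact tendsto_atTop_mono' Filter.atTop
      (by filter_upwards [Filter.eventually_ge_atTop N] with n hn using hflow j n hn) hll
  -- key convergence for suboptimal arms
  have key : ∀ k : Fin K, 0 < gap hK θ k →
      Filter.Tendsto (fun n : ℕ => ucbExpCount hK f P X n k / n) Filter.atTop (nhds 0) := by
    intro k hΔpos
    set μk : ℝ := mean (θ k) with hμk
    set μs : ℝ := bestMean hK θ with hμs
    set Δ : ℝ := gap hK θ k with hΔdef
    have hΔeq : Δ = μs - μk := rfl
    have hε : (0:ℝ) < Δ / 3 := by linarith
    have hempmeas : ∀ (jj : Fin K) (s : ℕ),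
        Measurable (fun ω => empMean (fun u => X jj u ω) s) := fun jj s =>
      (Finset.measurable_sum _ (fun u _ => hT.1 jj u)).div_const _
    set G : ℕ → Set Ω := fun j => {ω |
      (∀ s ≥ j, empMean (fun u => X k u ω) s ≤ μk + Δ/3) ∧
      (∀ s ≥ j, μs - Δ/3 ≤ empMean (fun u => X kstar u ω) s)} with hGdef
    have hGmeas : ∀ j, MeasurableSet (G j) := by
      intro j
      have h1 : G j = (⋂ s, ⋂ _ : j ≤ s,
          {ω | empMean (fun u => X k u ω) s ≤ μk + Δ/3}) ∩
          (⋂ s, ⋂ _ : j ≤ s, {ω | μs - Δ/3 ≤ empMean (fun u => X kstar u ω) s}) := by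
        ext ω
        simp only [hGdef, Set.mem_setOf_eq, Set.mem_inter_iff, Set.mem_iInter, ge_iff_le]
      rw [h1]
      exact ((MeasurableSet.iInter fun s => MeasurableSet.iInter fun _ =>
          measurableSet_le (hempmeas k s) measurable_const)).inter
        ((MeasurableSet.iInter fun s => MeasurableSet.iInter fun _ =>
          measurableSet_le measurable_const (hempmeas kstar s)))
    have hGmono : Monotone G := fun a b hab ω hω =>
      ⟨fun s hs => hω.1 s (le_trans hab hs), fun s hs => hω.2 s (le_trans hab hs)⟩
    have hGae : ∀ᵐ ω ∂P, ∃ m, ω ∈ G m := by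
      filter_upwards [slln_arm hP hT k hε, slln_arm hP hT kstar hε] with ω h1 h2
      obtain ⟨m1, hm1⟩ := h1
      obtain ⟨m2, hm2⟩ := h2
      refine ⟨max m1 m2, ?_, ?_⟩
      · intro s hs
        have := hm1 s (le_trans (le_max_left _ _) hs)
        rw [abs_le] at this
        linarith [this.2]
      · intro s hs
        have := hm2 s (le_trans (le_max_right _ _) hs)
        rw [abs_le] at this
        have h2' := this.1
        rw [← hbs] at h2'
        linarith
    set M : Ω → ℕ := fun ω => sInf {m | ω ∈ G m} with hMdef
    have hMmeas : Measurable M := measurable_sInf_mem hGmeas hGmono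
    have hne : ∀ c : ℝ, {t : ℕ | K + 1 ≤ t ∧ c ≤ f kstar t}.Nonempty := by
      intro c
      obtain ⟨t, ht1, ht2⟩ :=
        ((Filter.eventually_ge_atTop (K+1)).and ((hftop kstar).eventually_ge_atTop c)).exists
      exact ⟨t, ht1, ht2⟩
    set τ : ℕ → ℕ := fun m => sInf {t : ℕ | K + 1 ≤ t ∧ (max (m:ℝ) 1) ≤ f kstar t} with hτdef
    have hτspec : ∀ m : ℕ, K + 1 ≤ τ m ∧ (max (m:ℝ) 1) ≤ f kstar (τ m) :=
      fun m => Nat.sInf_mem (hne _)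
    -- pointwise bound
    set cnt : ℕ → Ω → ℝ := fun n ω => ((ucbCount hK f (fun j u => X j u ω) n k : ℕ) : ℝ)
      with hcnt
    have hptwise : ∀ᵐ ω ∂P, ∀ n : ℕ,
        cnt n ω ≤ (τ (M ω) : ℝ) + (M ω : ℝ) + 9 * max (f k n) 0 / Δ ^ 2 + 1 := by
      filter_upwards [hGae] with ω hω n
      have hωG : ω ∈ G (M ω) := Nat.sInf_mem hω
      exact det_bound hK f (fun j u => X j u ω) k kstar μk μs Δ (M ω) (τ (M ω))
        (fun j u => hT.2.1 j u ω) hΔeq hΔpos hμs1 hωG.1 hωG.2 (hτspec (M ω)).1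
        (fun t ht => le_trans (hτspec (M ω)).2 (hf kstar ht)) (hf k) n
    set H : ℕ → Ω → ℝ := fun n ω =>
      min (n:ℝ) ((τ (M ω) : ℝ) + (M ω : ℝ) + 9 * max (f k n) 0 / Δ ^ 2 + 1) with hHdef
    have hHmeas : ∀ n, Measurable (H n) := by
      intro n
      have h1 : Measurable (fun ω => ((τ (M ω) : ℕ) : ℝ)) :=
        (measurable_from_nat (f := fun m : ℕ => ((τ m : ℕ) : ℝ))).comp hMmeas
      have h2 : Measurable (fun ω => ((M ω : ℕ) : ℝ)) :=
        (measurable_from_nat (f := fun m : ℕ => ((m : ℕ) : ℝ))).comp hMmeas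
      exact Measurable.min measurable_const (((h1.add h2).add_const _).add_const _)
    have hH0 : ∀ n ω, 0 ≤ H n ω := by
      intro n ω
      have h9 : (0:ℝ) ≤ 9 * max (f k n) 0 / Δ ^ 2 := div_nonneg (by positivity) (by positivity)
      exact le_min (Nat.cast_nonneg n) (by positivity)
    have hHle : ∀ n ω, H n ω ≤ (n:ℝ) := fun n ω => min_le_left _ _
    have hHint : ∀ n, Integrable (H n) P := by
      intro n
      apply Integrable.mono' (integrable_const ((n:ℕ):ℝ)) (hHmeas n).aestronglyMeasurable
      refine Filter.Eventually.of_forall fun ω => ?_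
      rw [Real.norm_eq_abs, abs_of_nonneg (hH0 n ω)]
      exact hHle n ω
    have hcntle : ∀ n ω, cnt n ω ≤ (n:ℝ) := by
      intro n ω
      simp only [hcnt]
      exact_mod_cast ucbCount_le hK f (fun j u => X j u ω) n k
    have hcnt0 : ∀ n ω, 0 ≤ cnt n ω := fun n ω => Nat.cast_nonneg _
    have hcntH : ∀ᵐ ω ∂P, ∀ n, cnt n ω ≤ H n ω := by
      filter_upwards [hptwise] with ω hω n
      exact le_min (hcntle n ω) (hω n)
    have hEexpr : ∀ n, ucbExpCount hK f P X n k = ∫ ω, cnt n ω ∂P := fun n => rfl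
    have hEnonneg : ∀ n, 0 ≤ ucbExpCount hK f P X n k := by
      intro n
      rw [hEexpr n]
      exact integral_nonneg (hcnt0 n)
    have hEbound : ∀ n, ucbExpCount hK f P X n k ≤ ∫ ω, H n ω ∂P := by
      intro n
      rw [hEexpr n]
      by_cases hI : Integrable (cnt n) P
      · exact integral_mono_ae hI (hHint n)
          (by filter_upwards [hcntH] with ω hω using hω n)
      · rw [integral_undef hI]
        exact integral_nonneg (hH0 n)
    -- little-o facts
    have hmaxo : (fun n : ℕ => max (f k n) 0) =o[Filter.atTop] fun n : ℕ => (n:ℝ) := by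
      refine (Asymptotics.isBigO_of_le Filter.atTop fun n => ?_).trans_isLittleO (hfo k)
      rw [Real.norm_eq_abs, Real.norm_eq_abs, abs_of_nonneg (le_max_right (f k n) 0)]
      exact max_le (le_abs_self _) (abs_nonneg _)
    have hmaxtend : Filter.Tendsto (fun n : ℕ => max (f k n) 0 / n) Filter.atTop (nhds 0) := by
      refine (Asymptotics.isLittleO_iff_tendsto' ?_).1 hmaxo
      filter_upwards [Filter.eventually_gt_atTop 0] with n hn h0
      exact absurd h0 (Nat.cast_ne_zero.2 hn.ne')
    have hΔne : Δ ≠ 0 := ne_of_gt hΔpos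
    -- dominated convergence
    have hDCT : Filter.Tendsto (fun n : ℕ => ∫ ω, H n ω / n ∂P) Filter.atTop (nhds 0) := by
      have hbnd : ∀ n : ℕ, ∀ᵐ ω ∂P, ‖H n ω / n‖ ≤ (1:ℝ) := by
        intro n
        refine Filter.Eventually.of_forall fun ω => ?_
        rw [Real.norm_eq_abs, abs_of_nonneg (div_nonneg (hH0 n ω) (Nat.cast_nonneg n))]
        rcases Nat.eq_zero_or_pos n with h0 | hpos
        · subst h0; simp
        · rw [div_le_one (by exact_mod_cast hpos)]
          exact hHle n ω
      have hlimω : ∀ᵐ ω ∂P, Filter.Tendsto (fun n : ℕ => H n ω / n)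
          Filter.atTop (nhds 0) := by
        refine Filter.Eventually.of_forall fun ω => ?_
        set C : ℝ := (τ (M ω) : ℝ) + (M ω : ℝ) with hC
        have hlim : Filter.Tendsto
            (fun n : ℕ => (C + 1) / (n:ℝ) + 9 / Δ ^ 2 * (max (f k n) 0 / n))
            Filter.atTop (nhds 0) := by
          have h1 := tendsto_const_div_atTop_nhds_zero_nat (C + 1)
          have h2 := hmaxtend.const_mul (9 / Δ ^ 2)
          simpa using h1.add h2
        refine squeeze_zero' (Filter.Eventually.of_forall fun n =>
          div_nonneg (hH0 n ω) (Nat.cast_nonneg n)) ?_ hlim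
        filter_upwards [Filter.eventually_gt_atTop 0] with n hn
        have hnpos : (0:ℝ) < n := by exact_mod_cast hn
        have h1 : H n ω ≤ C + 9 * max (f k n) 0 / Δ ^ 2 + 1 := min_le_right _ _
        calc H n ω / n ≤ (C + 9 * max (f k n) 0 / Δ ^ 2 + 1) / n := by gcongr
          _ = (C + 1) / (n:ℝ) + 9 / Δ ^ 2 * (max (f k n) 0 / n) := by
              field_simp
              ring
      have := MeasureTheory.tendsto_integral_of_dominated_convergence
        (F := fun (n : ℕ) (ω : Ω) => H n ω / n) (f := fun _ => (0:ℝ))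
        (bound := fun _ => (1:ℝ)) (μ := P)
        (fun n => ((hHmeas n).div_const _).aestronglyMeasurable)
        (integrable_const 1) hbnd (by simpa using hlimω)
      simpa using this
    -- conclude
    refine squeeze_zero' (Filter.Eventually.of_forall fun n =>
      div_nonneg (hEnonneg n) (Nat.cast_nonneg n)) ?_ hDCT
    refine Filter.Eventually.of_forall fun n => ?_
    have hIeq : ∫ ω, H n ω / n ∂P = (∫ ω, H n ω ∂P) / n := integral_div _ _
    rw [hIeq]
    rcases Nat.eq_zero_or_pos n with h0 | hpos
    · subst h0; simp
    · have hnpos : (0:ℝ) < n := by exact_mod_cast hpos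
      exact (div_le_div_iff_of_pos_right hnpos).2 (hEbound n)
  have hsum : ∀ k : Fin K, (fun n : ℕ => gap hK θ k * ucbExpCount hK f P X n k)
      =o[Filter.atTop] fun n : ℕ => (n:ℝ) := by
    intro k
    rcases (hgap0 k).eq_or_lt with h0 | hpos
    · simp only [← h0, zero_mul]
      exact Asymptotics.isLittleO_zero _ _
    · have ho : (fun n : ℕ => ucbExpCount hK f P X n k)
          =o[Filter.atTop] fun n : ℕ => (n:ℝ) := by
        refine (Asymptotics.isLittleO_iff_tendsto' ?_).2 (key k hpos)
        filter_upwards [Filter.eventually_gt_atTop 0] with n hn h0'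
        exact absurd h0' (Nat.cast_ne_zero.2 hn.ne')
      exact ho.const_mul_left _
  have hre : (fun n : ℕ => ucbRegret hK f P θ X n) =
      fun n : ℕ => ∑ k, gap hK θ k * ucbExpCount hK f P X n k := rfl
  rw [hre]
  exact Asymptotics.IsLittleO.fun_sum fun k _ => hsum k

end Bandit
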